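/- arXiv:1605.06918 — 4 statements merged into one kernel-verified Lean document; each statement's English description precedes it below -/
import Mathlib

section
/- A graph G satisfies γ_R(G) = 2γ(G) if and only if there exists a Roman dominating function f = (B_0, B_1, B_2) of minimum weight with B_1 = ∅ (i.e., f takes only the values 0 and 2). -/
variable {V : Type*}

/-- A Roman dominating function: every vertex with value 0 has a neighbor with value 2. -/
def IsRDF (G : SimpleGraph V) (f : V → Fin 3) : Prop :=
  ∀ v, f v = 0 → ∃ u, G.Adj u v ∧ f u = 2

/-- The weight of a Roman dominating function. -/
def romanWeight [Fintype V] (f : V → Fin 3) : ℕ := ∑ v, (f v : ℕ)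

/-- The Roman domination number. -/
noncomputable def gammaR [Fintype V] (G : SimpleGraph V) : ℕ :=
  sInf {k | ∃ f : V → Fin 3, IsRDF G f ∧ romanWeight f = k}

/-- A dominating set. -/
def IsDomSet (G : SimpleGraph V) (D : Set V) : Prop :=
  ∀ v, v ∈ D ∨ ∃ u ∈ D, G.Adj u v

/-- The domination number. -/
noncomputable def gamma [Fintype V] (G : SimpleGraph V) : ℕ :=
  sInf {k | ∃ D : Set V, IsDomSet G D ∧ D.ncard = k}

/-- The generalized Sierpiński graph `S(G,t)` on words of length `t` over `V`. -/
def sierpinski (G : SimpleGraph V) (t : ℕ) : SimpleGraph (Fin t → V) where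
  Adj x y := ∃ i : Fin t, (∀ j, j < i → x j = y j) ∧ G.Adj (x i) (y i) ∧
    (∀ j, i < j → x j = y i ∧ y j = x i)
  symm := by
    constructor
    rintro x y ⟨i, h1, h2, h3⟩
    exact ⟨i, fun j hj => (h1 j hj).symm, h2.symm, fun j hj => ⟨(h3 j hj).2, (h3 j hj).1⟩⟩
  loopless := by
    constructor
    rintro x ⟨i, -, h2, -⟩
    exact G.ne_of_adj h2 rfl

lemma weight_indicator [Fintype V] (D : Set V) [DecidablePred (· ∈ D)] :
    romanWeight (fun v => if v ∈ D then (2 : Fin 3) else 0) = 2 * D.ncard := by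
  classical
  unfold romanWeight
  rw [Set.ncard_eq_toFinset_card']
  have : ∀ v : V, (((if v ∈ D then (2 : Fin 3) else 0) : Fin 3) : ℕ)
      = if v ∈ D.toFinset then 2 else 0 := by
    intro v; by_cases h : v ∈ D <;> simp [h]
  rw [Finset.sum_congr rfl (fun v _ => this v), Finset.sum_ite_mem,
    Finset.univ_inter, Finset.sum_const, smul_eq_mul, mul_comm]

lemma dom_rdf (G : SimpleGraph V) {D : Set V} [DecidablePred (· ∈ D)] (hD : IsDomSet G D) :
    IsRDF G (fun v => if v ∈ D then (2 : Fin 3) else 0) := by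
  intro v hv
  by_cases h : v ∈ D
  · simp [h] at hv
  · rcases hD v with h' | ⟨u, hu, hadj⟩
    · exact absurd h' h
    · exact ⟨u, hadj, by simp [hu]⟩

lemma gammaR_le [Fintype V] (G : SimpleGraph V) : gammaR G ≤ 2 * gamma G := by
  classical
  have hγ : gamma G ∈ {k | ∃ D : Set V, IsDomSet G D ∧ D.ncard = k} :=
    Nat.sInf_mem ⟨(Set.univ : Set V).ncard, Set.univ, fun v => Or.inl trivial, rfl⟩
  obtain ⟨D, hD, hDcard⟩ := hγ
  have := Nat.sInf_le (s := {k | ∃ f : V → Fin 3, IsRDF G f ∧ romanWeight f = k})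
    ⟨_, dom_rdf G hD, rfl⟩
  rwa [weight_indicator, hDcard] at this

theorem stmt2 [Fintype V] (G : SimpleGraph V) :
    gammaR G = 2 * gamma G ↔
      ∃ f : V → Fin 3, IsRDF G f ∧ romanWeight f = gammaR G ∧ ∀ v, f v ≠ 1 := by
  classical
  constructor
  · intro h
    have hγ : gamma G ∈ {k | ∃ D : Set V, IsDomSet G D ∧ D.ncard = k} :=
      Nat.sInf_mem ⟨(Set.univ : Set V).ncard, Set.univ, fun v => Or.inl trivial, rfl⟩
    obtain ⟨D, hD, hDcard⟩ := hγ
    refine ⟨fun v => if v ∈ D then (2 : Fin 3) else 0, dom_rdf G hD, ?_, ?_⟩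
    · rw [weight_indicator, hDcard, h]
    · intro v; by_cases hv : v ∈ D <;> simp [hv]
  · rintro ⟨f, hf, hw, h1⟩
    set D : Set V := {v | f v = 2} with hDdef
    have hdom : IsDomSet G D := by
      intro v
      have h3 : f v = 0 ∨ f v = 1 ∨ f v = 2 := by omega
      rcases h3 with h0 | h1' | h2
      · obtain ⟨u, hadj, hu⟩ := hf v h0
        exact Or.inr ⟨u, hu, hadj⟩
      · exact absurd h1' (h1 v)
      · exact Or.inl h2
    have hwf : romanWeight f = 2 * D.ncard := by
      have heq : f = fun v => if v ∈ D then (2 : Fin 3) else 0 := by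
        funext v
        have h3 : f v = 0 ∨ f v = 1 ∨ f v = 2 := by omega
        rcases h3 with h0 | h1' | h2
        · have : v ∉ D := by simp [hDdef, h0]
          simp [this, h0]
        · exact absurd h1' (h1 v)
        · have : v ∈ D := h2
          simp [this, h2]
      rw [heq, weight_indicator]
    have hγle : gamma G ≤ D.ncard := Nat.sInf_le ⟨D, hdom, rfl⟩
    have : 2 * gamma G ≤ gammaR G := by
      rw [← hw, hwf]; omega
    exact le_antisymm (gammaR_le G) this
end

section
/- Let G = (V,E) be a graph of order n ≥ 2, t ≥ 2 an integer, and S(G,t) the generalized Sierpiński graph of G. For w ∈ V^{t-1}, let V_w = {wx : x ∈ V}. If u ∈ V_w and v ∈ V^t \ V_w are adjacent in S(G,t), then either u is the extreme vertex of ⟨V_w⟩ (i.e., u has the form w'xx...x for some word w' and vertex x) or u is adjacent in ⟨V_w⟩ to that extreme vertex. -/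
variable {V : Type*}

theorem stmt6 (G : SimpleGraph V) (t : ℕ) (ht : 2 ≤ t)
    (u v : Fin t → V) (hadj : (sierpinski G t).Adj u v)
    (hv : ∃ j : Fin t, (j : ℕ) < t - 1 ∧ v j ≠ u j) :
    u = Function.update u ⟨t - 1, by omega⟩ (u ⟨t - 2, by omega⟩) ∨
      (sierpinski G t).Adj u (Function.update u ⟨t - 1, by omega⟩ (u ⟨t - 2, by omega⟩)) := by
  obtain ⟨i, h1, h2, h3⟩ := hadj
  obtain ⟨j, hj, hne⟩ := hv
  have hi : (i : ℕ) < t - 1 := by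
    rcases lt_or_ge (j : ℕ) (i : ℕ) with hlt | hge
    · exact absurd (h1 j hlt).symm hne
    · omega
  rcases lt_or_ge (i : ℕ) (t - 2) with hc | hc
  · left
    funext k
    rcases eq_or_ne k ⟨t - 1, by omega⟩ with rfl | hk
    · have ha := (h3 ⟨t - 1, by omega⟩ (by simp [Fin.lt_def]; omega)).1
      have hb := (h3 ⟨t - 2, by omega⟩ (by simp [Fin.lt_def]; omega)).1
      rw [Function.update_self, ha, hb]
    · rw [Function.update_of_ne hk]
  · have hieq : i = (⟨t - 2, by omega⟩ : Fin t) := by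
      apply Fin.ext; simp; omega
    right
    refine ⟨⟨t - 1, by omega⟩, ?_, ?_, ?_⟩
    · intro k hk
      rw [Function.update_of_ne (Fin.ne_of_lt hk)]
    · rw [Function.update_self]
      have ha := (h3 ⟨t - 1, by omega⟩ (by simp [Fin.lt_def]; omega)).1
      rw [ha, ← hieq]
      exact h2.symm
    · intro k hk
      have := k.isLt
      simp [Fin.lt_def] at hk
      omega
end

section
/- Let G be a graph of order n with a minimum-weight Roman dominating function f = (B_0, B_1, B_2). Let D_1, D_2 be the sets of non-isolated vertices in the subgraphs induced by B_1 and B_2 respectively, and D_{12} the set of non-isolated vertices of the subgraph induced by B_1 ∪ B_2. Then for every integer t ≥ 2: γ_R(S(G,t)) ≤ n^{t-2}(n·γ_R(G) − |B_2| − |D_{12}| + |D_1|/2). -/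
variable {V : Type*}

/-- vertices of value 1 with a value-1 neighbor -/
def D1p (G : SimpleGraph V) (f : V → Fin 3) (x : V) : Prop :=
  f x = 1 ∧ ∃ u, G.Adj u x ∧ f u = 1

open Classical in
noncomputable def pm (G : SimpleGraph V) (f : V → Fin 3) (x : V) : V :=
  if h : D1p G f x then h.2.choose else x

lemma pm_spec {G : SimpleGraph V} {f : V → Fin 3} {x : V} (h : D1p G f x) :
    G.Adj (pm G f x) x ∧ f (pm G f x) = 1 := by
  rw [pm, dif_pos h]; exact h.2.choose_spec

lemma pm_ne {G : SimpleGraph V} {f : V → Fin 3} {x : V} (h : D1p G f x) :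
    pm G f x ≠ x := (pm_spec h).1.ne

lemma pm_D1 {G : SimpleGraph V} {f : V → Fin 3} {x : V} (h : D1p G f x) :
    D1p G f (pm G f x) := ⟨(pm_spec h).2, x, (pm_spec h).1.symm, h.1⟩

def Or2 [LinearOrder V] (G : SimpleGraph V) (f : V → Fin 3) (x y : V) : Prop :=
  D1p G f x ∧ y = pm G f x ∧ (pm G f y ≠ x ∨ x < y)

lemma or2_ne [LinearOrder V] {G : SimpleGraph V} {f : V → Fin 3} {x y : V}
    (h : Or2 G f x y) : x ≠ y := fun e => pm_ne h.1 (e ▸ h.2.1.symm)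

lemma or2_fy [LinearOrder V] {G : SimpleGraph V} {f : V → Fin 3} {x y : V}
    (h : Or2 G f x y) : f y = 1 := h.2.1 ▸ (pm_spec h.1).2

lemma or2_adj [LinearOrder V] {G : SimpleGraph V} {f : V → Fin 3} {x y : V}
    (h : Or2 G f x y) : G.Adj x y := h.2.1 ▸ (pm_spec h.1).1.symm

lemma or2_asymm [LinearOrder V] {G : SimpleGraph V} {f : V → Fin 3} {x y : V}
    (h : Or2 G f x y) (h' : Or2 G f y x) : False := by
  obtain ⟨d1, e1, c1⟩ := h
  obtain ⟨d1', e1', c1'⟩ := h'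
  rcases c1 with c | c
  · exact c e1'.symm
  · rcases c1' with c' | c'
    · exact c' e1.symm
    · exact absurd c' (not_lt.2 c.le)

open Classical in
/-- the modified RDF on S(G,2) viewed as a two-argument function -/
noncomputable def g2 [LinearOrder V] (G : SimpleGraph V) (f : V → Fin 3) (x y : V) : Fin 3 :=
  if x = y then
    (if f x = 2 then (if ∃ u, G.Adj u x ∧ f u = 2 then 0 else 1)
     else if Or2 G f x (pm G f x) then 0 else f x)
  else if Or2 G f x y then 2 else if Or2 G f y x then 0 else f y

lemma g2_of_f2 [LinearOrder V] {G : SimpleGraph V} {f : V → Fin 3} {x u : V}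
    (hu : f u = 2) (hne : x ≠ u) : g2 G f x u = 2 := by
  rw [g2, if_neg hne, if_neg, if_neg]
  · exact hu
  · intro h; rw [h.1.1] at hu; exact absurd hu (by decide)
  · intro h; rw [or2_fy h] at hu; exact absurd hu (by decide)

lemma g2_boost [LinearOrder V] {G : SimpleGraph V} {f : V → Fin 3} {x y : V}
    (h : Or2 G f x y) : g2 G f x y = 2 := by
  rw [g2, if_neg (or2_ne h), if_pos h]

/-- key local Roman-domination property of g2 -/
lemma g2_rdf2 [LinearOrder V] {G : SimpleGraph V} {f : V → Fin 3} (hf : IsRDF G f)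
    (x y : V) (h0 : g2 G f x y = 0) :
    (∃ y', G.Adj y y' ∧ g2 G f x y' = 2) ∨ (G.Adj x y ∧ g2 G f y x = 2) := by
  classical
  by_cases hxy : x = y
  · subst hxy
    rw [g2, if_pos rfl] at h0
    by_cases h2 : f x = 2
    · rw [if_pos h2] at h0
      by_cases hA : ∃ u, G.Adj u x ∧ f u = 2
      · obtain ⟨u, hu, hu2⟩ := hA
        refine Or.inl ⟨u, hu.symm, g2_of_f2 hu2 ?_⟩
        rintro rfl; exact G.ne_of_adj hu rfl
      · rw [if_neg hA] at h0; exact absurd h0 (by decide)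
    · rw [if_neg h2] at h0
      by_cases hc : Or2 G f x (pm G f x)
      · exact Or.inl ⟨pm G f x, (pm_spec hc.1).1.symm, g2_boost hc⟩
      · rw [if_neg hc] at h0
        obtain ⟨u, hu, hu2⟩ := hf x h0
        exact Or.inl ⟨u, hu.symm, g2_of_f2 hu2 (fun e => h2 (e ▸ hu2))⟩
  · rw [g2, if_neg hxy] at h0
    by_cases hO : Or2 G f x y
    · rw [if_pos hO] at h0; exact absurd h0 (by decide)
    rw [if_neg hO] at h0
    by_cases hO' : Or2 G f y x
    · exact Or.inr ⟨(or2_adj hO').symm, g2_boost hO'⟩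
    rw [if_neg hO'] at h0
    obtain ⟨u, hu, hu2⟩ := hf y h0
    by_cases hux : u = x
    · subst hux
      exact Or.inr ⟨hu, g2_of_f2 hu2 (Ne.symm hxy)⟩
    · exact Or.inl ⟨u, hu.symm, g2_of_f2 hu2 (Ne.symm hux)⟩

open Classical in
/-- cell-wise weight identity for g2 -/
lemma g2_cell [LinearOrder V] (G : SimpleGraph V) (f : V → Fin 3) (x y : V) :
    ((g2 G f x y : ℕ) : ℚ) = ((f y : ℕ) : ℚ)
      - (if x = y then
           (if f x = 2 then (if ∃ u, G.Adj u x ∧ f u = 2 then 2 else 1)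
            else if Or2 G f x (pm G f x) then 1 else 0) else 0)
      + (if Or2 G f x y then 1 else 0) - (if Or2 G f y x then 1 else 0) := by
  by_cases hxy : x = y
  · subst hxy
    have hO : ¬ Or2 G f x x := fun h => or2_ne h rfl
    rw [g2, if_pos rfl, if_pos rfl, if_neg hO]
    by_cases h2 : f x = 2
    · rw [if_pos h2, if_pos h2, h2]
      by_cases hA : ∃ u, G.Adj u x ∧ f u = 2
      · rw [if_pos hA, if_pos hA]; norm_num
      · rw [if_neg hA, if_neg hA]; norm_num
    · rw [if_neg h2, if_neg h2]
      by_cases hc : Or2 G f x (pm G f x)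
      · rw [if_pos hc, if_pos hc, hc.1.1]; norm_num
      · rw [if_neg hc, if_neg hc]; ring
  · rw [g2, if_neg hxy, if_neg hxy]
    by_cases hO : Or2 G f x y
    · have hO' : ¬ Or2 G f y x := fun h => or2_asymm hO h
      rw [if_pos hO, if_pos hO, if_neg hO', or2_fy hO]; norm_num
    rw [if_neg hO, if_neg hO]
    by_cases hO' : Or2 G f y x
    · rw [if_pos hO', if_pos hO', hO'.1.1]; norm_num
    · rw [if_neg hO', if_neg hO']; ring

lemma noB1B2 [Fintype V] {G : SimpleGraph V} {f : V → Fin 3} (hf : IsRDF G f)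
    (hmin : romanWeight f = gammaR G) {u v : V} (huv : G.Adj u v) (hu : f u = 1) :
    f v ≠ 2 := by
  classical
  intro hv
  have hne : v ≠ u := by intro e; rw [e, hu] at hv; exact absurd hv (by decide)
  set f' : V → Fin 3 := Function.update f u 0 with hf'
  have hrdf : IsRDF G f' := by
    intro w hw
    by_cases hwu : w = u
    · subst hwu
      exact ⟨v, huv.symm, by rw [hf', Function.update_of_ne hne]; exact hv⟩
    · rw [hf', Function.update_of_ne hwu] at hw
      obtain ⟨d, hd, hd2⟩ := hf w hw
      have hdu : d ≠ u := by intro e; rw [e, hu] at hd2; exact absurd hd2 (by decide)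
      exact ⟨d, hd, by rw [hf', Function.update_of_ne hdu]; exact hd2⟩
  have hw' : romanWeight f' + 1 = romanWeight f := by
    have hcomp : (fun x => ((f' x : ℕ))) = Function.update (fun x => ((f x : ℕ))) u 0 := by
      funext x
      exact (Function.apply_update (fun _ v => ((v : Fin 3) : ℕ)) f u 0 x)
    rw [romanWeight, romanWeight, show (∑ x, ((f' x : ℕ))) = ∑ x, Function.update (fun x => ((f x : ℕ))) u 0 x by rw [← hcomp]]
    rw [Finset.sum_update_of_mem (Finset.mem_univ u)]
    rw [Finset.sum_eq_sum_sdiff_singleton_add (Finset.mem_univ u) (fun x => ((f x : ℕ)))]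
    rw [hu]
    simp
  have hle : gammaR G ≤ romanWeight f' := Nat.sInf_le ⟨f', hrdf, rfl⟩
  omega

open Classical in
noncomputable def dropQ [LinearOrder V] (G : SimpleGraph V) (f : V → Fin 3) (x : V) : ℚ :=
  if f x = 2 then (if ∃ u, G.Adj u x ∧ f u = 2 then 2 else 1)
  else if Or2 G f x (pm G f x) then 1 else 0

open Classical in
lemma g2_weight [Fintype V] [LinearOrder V] (G : SimpleGraph V) (f : V → Fin 3) :
    ∑ x, ∑ y, ((g2 G f x y : ℕ) : ℚ)
      = (Fintype.card V : ℚ) * (∑ y, ((f y : ℕ) : ℚ)) - ∑ x, dropQ G f x := by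
  have h1 : ∀ x : V, ∑ y, ((g2 G f x y : ℕ) : ℚ)
      = (∑ y, ((f y : ℕ) : ℚ)) - dropQ G f x
        + (∑ y, if Or2 G f x y then (1:ℚ) else 0)
        - (∑ y, if Or2 G f y x then (1:ℚ) else 0) := by
    intro x
    have : ∀ y : V, ((g2 G f x y : ℕ) : ℚ) = ((f y : ℕ) : ℚ)
        - (if x = y then dropQ G f x else 0)
        + (if Or2 G f x y then (1:ℚ) else 0) - (if Or2 G f y x then (1:ℚ) else 0) := by
      intro y
      rw [g2_cell G f x y, dropQ]
    rw [Finset.sum_congr rfl (fun y _ => this y), Finset.sum_sub_distrib,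
      Finset.sum_add_distrib, Finset.sum_sub_distrib, Finset.sum_ite_eq]
    simp
  rw [Finset.sum_congr rfl (fun x _ => h1 x), Finset.sum_sub_distrib,
    Finset.sum_add_distrib, Finset.sum_sub_distrib, Finset.sum_const, Finset.sum_comm]
  simp [mul_comm]

open Classical in
lemma dropQ_sum [Fintype V] [LinearOrder V] (G : SimpleGraph V) (f : V → Fin 3) :
    ∑ x, dropQ G f x
      = ((Finset.univ.filter (fun x => f x = 2)).card : ℚ)
        + ((Finset.univ.filter (fun x => f x = 2 ∧ ∃ u, G.Adj u x ∧ f u = 2)).card : ℚ)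
        + ((Finset.univ.filter (fun x => Or2 G f x (pm G f x))).card : ℚ) := by
  have hpt : ∀ x : V, dropQ G f x = (if f x = 2 then (1:ℚ) else 0)
      + (if f x = 2 ∧ ∃ u, G.Adj u x ∧ f u = 2 then (1:ℚ) else 0)
      + (if Or2 G f x (pm G f x) then (1:ℚ) else 0) := by
    intro x
    rw [dropQ]
    by_cases h2 : f x = 2
    · have hc : ¬ Or2 G f x (pm G f x) := by
        intro h; rw [h.1.1] at h2; exact absurd h2 (by decide)
      rw [if_pos h2, if_pos h2, if_neg hc]
      by_cases hA : ∃ u, G.Adj u x ∧ f u = 2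
      · rw [if_pos hA, if_pos (⟨h2, hA⟩ : f x = 2 ∧ _)]; norm_num
      · rw [if_neg hA, if_neg (fun h => hA h.2)]; norm_num
    · simp [h2]
  rw [Finset.sum_congr rfl (fun x _ => hpt x), Finset.sum_add_distrib, Finset.sum_add_distrib]
  simp [Finset.sum_boole]

open Classical in
lemma card_D12_le [Fintype V] {G : SimpleGraph V} {f : V → Fin 3} (hf : IsRDF G f)
    (hmin : romanWeight f = gammaR G) :
    (Finset.univ.filter (fun v => (f v = 1 ∨ f v = 2) ∧
        ∃ u, G.Adj u v ∧ (f u = 1 ∨ f u = 2))).card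
      ≤ (Finset.univ.filter (fun x => f x = 2 ∧ ∃ u, G.Adj u x ∧ f u = 2)).card
        + (Finset.univ.filter (fun x => D1p G f x)).card := by
  refine le_trans (Finset.card_le_card ?_) (Finset.card_union_le _ _)
  intro v hv
  rw [Finset.mem_filter] at hv
  obtain ⟨-, hv1, u, huv, hu⟩ := hv
  rw [Finset.mem_union, Finset.mem_filter, Finset.mem_filter]
  rcases hv1 with h1 | h2
  · refine Or.inr ⟨Finset.mem_univ v, h1, u, huv, ?_⟩
    rcases hu with hu1 | hu2
    · exact hu1
    · exact absurd hu2 (noB1B2 hf hmin huv.symm h1)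
  · refine Or.inl ⟨Finset.mem_univ v, h2, u, huv, ?_⟩
    rcases hu with hu1 | hu2
    · exact absurd h2 (noB1B2 hf hmin huv hu1)
    · exact hu2

open Classical in
lemma card_D1_le [Fintype V] [LinearOrder V] (G : SimpleGraph V) (f : V → Fin 3) :
    (Finset.univ.filter (fun x => D1p G f x)).card
      ≤ 2 * (Finset.univ.filter (fun x => Or2 G f x (pm G f x))).card := by
  set C := Finset.univ.filter (fun x => Or2 G f x (pm G f x)) with hC
  set U := Finset.univ.filter (fun x => D1p G f x ∧ ¬ Or2 G f x (pm G f x)) with hU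
  have hsub : Finset.univ.filter (fun x => D1p G f x) ⊆ C ∪ U := by
    intro x hx
    rw [Finset.mem_filter] at hx
    rw [Finset.mem_union, hC, hU, Finset.mem_filter, Finset.mem_filter]
    by_cases h : Or2 G f x (pm G f x)
    · exact Or.inl ⟨Finset.mem_univ x, h⟩
    · exact Or.inr ⟨Finset.mem_univ x, hx.2, h⟩
  have hUprop : ∀ x ∈ U, pm G f (pm G f x) = x ∧ pm G f x < x ∧ D1p G f x := by
    intro x hx
    rw [hU, Finset.mem_filter] at hx
    obtain ⟨-, hD, hnc⟩ := hx
    rw [Or2] at hnc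
    push_neg at hnc
    obtain ⟨hpp, hlt⟩ := hnc hD rfl
    exact ⟨hpp, lt_of_le_of_ne hlt (pm_ne hD), hD⟩
  have hUC : U.card ≤ C.card := by
    apply Finset.card_le_card_of_injOn (pm G f)
    · intro x hx
      obtain ⟨hpp, hlt, hD⟩ := hUprop x hx
      rw [Finset.mem_coe, hC, Finset.mem_filter]
      refine ⟨Finset.mem_univ _, pm_D1 hD, rfl, Or.inr ?_⟩
      rw [hpp]
      exact hlt
    · intro x hx x' hx' he
      rw [← (hUprop x hx).1, ← (hUprop x' hx').1, he]
  calc (Finset.univ.filter (fun x => D1p G f x)).card ≤ (C ∪ U).card := Finset.card_le_card hsub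
    _ ≤ C.card + U.card := Finset.card_union_le _ _
    _ ≤ 2 * C.card := by omega

lemma sum_last_two [Fintype V] (F : V → V → ℕ) (k : ℕ) :
    ∑ w : Fin (k+2) → V, F (w (Fin.castSucc (Fin.last k))) (w (Fin.last (k+1)))
      = (Fintype.card V)^k * ∑ x, ∑ y, F x y := by
  induction k with
  | zero =>
    rw [← Equiv.sum_comp (Fin.consEquiv (fun _ : Fin 2 => V))
      (fun w => F (w (Fin.castSucc (Fin.last 0))) (w (Fin.last 1)))]
    rw [Fintype.sum_prod_type]
    simp only [Fin.consEquiv_apply]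
    have h0 : ∀ (a : V) (w : Fin 1 → V),
        (Fin.cons a w : Fin 2 → V) (Fin.castSucc (Fin.last 0)) = a := fun a w => rfl
    have h1 : ∀ (a : V) (w : Fin 1 → V),
        (Fin.cons a w : Fin 2 → V) (Fin.last 1) = w 0 := fun a w => rfl
    simp only [h0, h1]
    rw [pow_zero, one_mul]
    refine Finset.sum_congr rfl (fun a _ => ?_)
    rw [← Equiv.sum_comp (Equiv.funUnique (Fin 1) V).symm (fun w => F a (w 0))]
    rfl
  | succ k ih =>
    rw [← Equiv.sum_comp (Fin.consEquiv (fun _ : Fin (k+3) => V))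
      (fun w => F (w (Fin.castSucc (Fin.last (k+1)))) (w (Fin.last (k+2))))]
    rw [Fintype.sum_prod_type]
    simp only [Fin.consEquiv_apply]
    have h0 : ∀ (a : V) (w : Fin (k+2) → V),
        (Fin.cons a w : Fin (k+3) → V) (Fin.castSucc (Fin.last (k+1)))
          = w (Fin.castSucc (Fin.last k)) := fun a w => rfl
    have h1 : ∀ (a : V) (w : Fin (k+2) → V),
        (Fin.cons a w : Fin (k+3) → V) (Fin.last (k+2)) = w (Fin.last (k+1)) :=
      fun a w => rfl
    simp only [h0, h1]
    rw [Finset.sum_const, ih]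
    simp [pow_succ, mul_comm, mul_assoc, Finset.card_univ]

lemma gt_rdf [LinearOrder V] {G : SimpleGraph V} {f : V → Fin 3} (hf : IsRDF G f) (k : ℕ) :
    IsRDF (sierpinski G (k+2))
      (fun w => g2 G f (w (Fin.castSucc (Fin.last k))) (w (Fin.last (k+1)))) := by
  intro w hw
  set i0 : Fin (k+2) := Fin.castSucc (Fin.last k) with hi0
  set i1 : Fin (k+2) := Fin.last (k+1) with hi1
  have hi01 : i0 ≠ i1 := by
    rw [hi0, hi1]
    exact Fin.ne_of_val_ne (by
      simp only [Fin.coe_castSucc, Fin.val_last]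
      exact Nat.ne_of_lt (Nat.lt_succ_self k))
  have hi01lt : i0 < i1 := by
    rw [hi0, hi1, Fin.lt_def]
    simp only [Fin.coe_castSucc, Fin.val_last]
    exact Nat.lt_succ_self k
  rcases g2_rdf2 hf _ _ hw with ⟨y', hadj, h2⟩ | ⟨hadj, h2⟩
  · refine ⟨Function.update w i1 y', SimpleGraph.adj_symm _ ?_, ?_⟩
    · refine ⟨i1, fun j hj => (Function.update_of_ne (ne_of_lt hj) _ _).symm, ?_, ?_⟩
      · rw [Function.update_self]
        exact hadj
      · intro j hj
        exact absurd hj (not_lt.mpr (Fin.le_last j))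
    · show g2 G f (Function.update w i1 y' i0) (Function.update w i1 y' i1) = 2
      rw [Function.update_self, Function.update_of_ne hi01]
      exact h2
  · refine ⟨Function.update (Function.update w i0 (w i1)) i1 (w i0),
      SimpleGraph.adj_symm _ ?_, ?_⟩
    · refine ⟨i0, ?_, ?_, ?_⟩
      · intro j hj
        rw [Function.update_of_ne (ne_of_lt (lt_trans hj hi01lt)) _ _,
          Function.update_of_ne (ne_of_lt hj) _ _]
      · rw [Function.update_of_ne hi01, Function.update_self]
        exact hadj
      · intro j hj
        have hj1 : j = i1 := by
          rw [Fin.ext_iff]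
          rw [Fin.lt_def, hi0] at hj
          simp only [Fin.coe_castSucc, Fin.val_last] at hj
          have hjl := j.isLt
          rw [hi1, Fin.val_last]
          exact Nat.le_antisymm (Nat.lt_succ_iff.mp hjl) hj
        subst hj1
        constructor
        · rw [Function.update_of_ne hi01, Function.update_self]
        · rw [Function.update_self]
    · show g2 G f (Function.update (Function.update w i0 (w i1)) i1 (w i0) i0)
        (Function.update (Function.update w i0 (w i1)) i1 (w i0) i1) = 2
      rw [Function.update_self, Function.update_of_ne hi01, Function.update_self]
      exact h2

open Classical in
lemma ncard_filter [Fintype V] (P : V → Prop) :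
    {v | P v}.ncard = (Finset.univ.filter P).card := by
  rw [Set.ncard_eq_toFinset_card', Set.toFinset_setOf]

theorem stmt9 [Fintype V] (G : SimpleGraph V) (n : ℕ) (hn : Fintype.card V = n)
    (f : V → Fin 3) (hf : IsRDF G f) (hmin : romanWeight f = gammaR G)
    (t : ℕ) (ht : 2 ≤ t) :
    (gammaR (sierpinski G t) : ℚ) ≤ (n : ℚ) ^ (t - 2) *
      ((n : ℚ) * (gammaR G : ℚ) - ({v | f v = 2}.ncard : ℚ)
        - (({v | (f v = 1 ∨ f v = 2) ∧
              ∃ u, G.Adj u v ∧ (f u = 1 ∨ f u = 2)}.ncard : ℚ))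
        + ({v | f v = 1 ∧ ∃ u, G.Adj u v ∧ f u = 1}.ncard : ℚ) / 2) := by
  classical
  obtain ⟨k, rfl⟩ : ∃ k, t = k + 2 := ⟨t - 2, by omega⟩
  letI : LinearOrder V := LinearOrder.lift' (Fintype.equivFin V) (Fintype.equivFin V).injective
  have hrdf : IsRDF (sierpinski G (k+2))
      (fun w => g2 G f (w (Fin.castSucc (Fin.last k))) (w (Fin.last (k+1)))) := gt_rdf hf k
  have hle : gammaR (sierpinski G (k+2)) ≤
      romanWeight (fun w : Fin (k+2) → V => g2 G f (w (Fin.castSucc (Fin.last k))) (w (Fin.last (k+1)))) :=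
    Nat.sInf_le ⟨_, hrdf, rfl⟩
  have hwt : romanWeight (fun w : Fin (k+2) → V =>
      g2 G f (w (Fin.castSucc (Fin.last k))) (w (Fin.last (k+1))))
      = (Fintype.card V)^k * ∑ x, ∑ y, ((g2 G f x y : ℕ)) :=
    sum_last_two (fun x y => ((g2 G f x y : ℕ))) k
  -- cast everything to ℚ
  have hQ : (gammaR (sierpinski G (k+2)) : ℚ)
      ≤ ((Fintype.card V : ℚ))^k * ∑ x, ∑ y, ((g2 G f x y : ℕ) : ℚ) := by
    calc (gammaR (sierpinski G (k+2)) : ℚ) ≤ _ := Nat.cast_le.mpr hle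
      _ = _ := by rw [hwt]; push_cast; ring
  rw [g2_weight G f, dropQ_sum G f] at hQ
  -- identify the ncards
  have e1 : ({v | f v = 2}.ncard : ℚ)
      = ((Finset.univ.filter (fun x => f x = 2)).card : ℚ) := by
    rw [ncard_filter]
    congr!
  have e2 : ({v | (f v = 1 ∨ f v = 2) ∧ ∃ u, G.Adj u v ∧ (f u = 1 ∨ f u = 2)}.ncard : ℚ)
      = ((Finset.univ.filter (fun v => (f v = 1 ∨ f v = 2) ∧
          ∃ u, G.Adj u v ∧ (f u = 1 ∨ f u = 2))).card : ℚ) := by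
    rw [ncard_filter]
    congr!
  have e3 : ({v | f v = 1 ∧ ∃ u, G.Adj u v ∧ f u = 1}.ncard : ℚ)
      = ((Finset.univ.filter (fun x => D1p G f x)).card : ℚ) := by
    rw [show {v | f v = 1 ∧ ∃ u, G.Adj u v ∧ f u = 1} = {v | D1p G f v} from rfl, ncard_filter]
  have hsum_f : ∑ y, ((f y : ℕ) : ℚ) = (gammaR G : ℚ) := by
    rw [← hmin, romanWeight]
    push_cast
    rfl
  have hcard : ((Fintype.card V : ℚ)) = (n : ℚ) := by exact_mod_cast hn
  have hD12 : ((Finset.univ.filter (fun v => (f v = 1 ∨ f v = 2) ∧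
        ∃ u, G.Adj u v ∧ (f u = 1 ∨ f u = 2))).card : ℚ)
      ≤ ((Finset.univ.filter (fun x => f x = 2 ∧ ∃ u, G.Adj u x ∧ f u = 2)).card : ℚ)
        + ((Finset.univ.filter (fun x => D1p G f x)).card : ℚ) := by
    exact_mod_cast card_D12_le hf hmin
  have hD1 : ((Finset.univ.filter (fun x => D1p G f x)).card : ℚ)
      ≤ 2 * ((Finset.univ.filter (fun x => Or2 G f x (pm G f x))).card : ℚ) := by
    exact_mod_cast card_D1_le G f
  rw [show (k + 2 - 2) = k from rfl]
  rw [e1, e2, e3]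
  refine le_trans hQ ?_
  rw [hsum_f, hcard]
  apply mul_le_mul_of_nonneg_left _ (by positivity)
  linarith
end

section
/- If G is a graph of order n ≥ 4 having exactly one vertex of degree n−1 (exactly one universal vertex), then for any integer t ≥ 2: γ_R(S(G,t)) = n^{t-2}(2n − 1). -/
variable {V : Type*}

open Finset

namespace S11

variable {V : Type*} {s : ℕ}

def ext (w : Fin s → V) (u x : V) : Fin (s+2) → V := fun j =>
  if h : (j:ℕ) < s then w ⟨j, h⟩ else if (j:ℕ) = s then u else x

def iS : Fin (s+2) := ⟨s, by omega⟩
def iT : Fin (s+2) := ⟨s+1, by omega⟩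

lemma ext_lt (w : Fin s → V) (u x : V) {j : Fin (s+2)} (h : (j:ℕ) < s) :
    ext w u x j = w ⟨j, h⟩ := by simp [ext, h]

lemma ext_s (w : Fin s → V) (u x : V) {j : Fin (s+2)} (h : (j:ℕ) = s) :
    ext w u x j = u := by simp [ext, h]

lemma ext_t (w : Fin s → V) (u x : V) {j : Fin (s+2)} (h : (j:ℕ) = s + 1) :
    ext w u x j = x := by
  have h1 : ¬ ((j:ℕ) < s) := by omega
  have h2 : ¬ ((j:ℕ) = s) := by omega
  simp [ext, h1, h2]

lemma iS_val : ((iS : Fin (s+2)) : ℕ) = s := rfl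

lemma iT_val : ((iT : Fin (s+2)) : ℕ) = s + 1 := rfl

lemma ext_iS (w : Fin s → V) (u x : V) : ext w u x iS = u := ext_s w u x rfl

lemma ext_iT (w : Fin s → V) (u x : V) : ext w u x iT = x := ext_t w u x rfl

def pre (a : Fin (s+2) → V) : Fin s → V := fun j => a ⟨j, by omega⟩

lemma ext_pre (a : Fin (s+2) → V) : ext (pre a) (a iS) (a iT) = a := by
  funext j
  rcases lt_trichotomy (j:ℕ) s with h | h | h
  · rw [ext_lt _ _ _ h]; rfl
  · rw [ext_s _ _ _ h]; congr 1; exact (Fin.ext h).symm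
  · have h' : (j:ℕ) = s + 1 := by omega
    rw [ext_t _ _ _ h']; congr 1; exact (Fin.ext h').symm

def wordEquiv : ((Fin s → V) × V × V) ≃ (Fin (s+2) → V) where
  toFun p := ext p.1 p.2.1 p.2.2
  invFun a := (pre a, a iS, a iT)
  left_inv p := by
    obtain ⟨w, u, x⟩ := p
    refine Prod.ext ?_ (Prod.ext ?_ ?_)
    · funext j; exact ext_lt w u x j.2
    · exact ext_iS w u x
    · exact ext_iT w u x
  right_inv a := ext_pre a

lemma sum_words {M : Type*} [AddCommMonoid M] [Fintype V]
    (F : (Fin (s+2) → V) → M) :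
    ∑ a, F a = ∑ w : Fin s → V, ∑ u : V, ∑ x : V, F (ext w u x) := by
  rw [← Equiv.sum_comp (wordEquiv (V := V) (s := s)) F]
  rw [Fintype.sum_prod_type]
  exact Finset.sum_congr rfl fun w _ => Fintype.sum_prod_type _

/-- Edge witness at position `i`. -/
def EW {t : ℕ} (G : SimpleGraph V) (b a : Fin t → V) (i : Fin t) : Prop :=
  (∀ j, j < i → b j = a j) ∧ G.Adj (b i) (a i) ∧ (∀ j, i < j → b j = a i ∧ a j = b i)

lemma sier_adj {t : ℕ} (G : SimpleGraph V) (b a : Fin t → V) :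
    (sierpinski G t).Adj b a ↔ ∃ i, EW G b a i := Iff.rfl

section Block

variable [Fintype V] [DecidableEq V]

lemma val_one_le {a : Fin 3} (h : a ≠ 0) : 1 ≤ (a : ℕ) := by
  have h1 := a.isLt
  have h2 : (a : ℕ) ≠ 0 := fun hh => h (Fin.ext hh)
  omega

lemma val_two {a : Fin 3} (h : a = 2) : (a : ℕ) = 2 := by subst h; rfl

lemma sum_ind (s K : Finset V) :
    (∑ x ∈ s, if x ∈ K then (1 : ℕ) else 0) = (s ∩ K).card := by
  rw [← Finset.sum_filter, Finset.sum_const, smul_eq_mul, mul_one,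
    Finset.filter_mem_eq_inter]

lemma blockLemma (G : SimpleGraph V) (n : ℕ) (hn : Fintype.card V = n) (hn4 : 4 ≤ n)
    (v₀ : V) (hv₀ : ∀ x, x ≠ v₀ → G.Adj v₀ x)
    (hnu : ∀ u, u ≠ v₀ → ∃ z, z ≠ u ∧ ¬ G.Adj u z)
    (g : V → V → Fin 3) (A : V → Prop)
    (hdom : ∀ u x, (u = x → ¬ A u) → g u x = 0 →
      (∃ y, G.Adj y x ∧ g u y = 2) ∨ (G.Adj u x ∧ g x u = 2))
    (χ : ℕ) (hχ : χ ≤ 1) (hχ' : χ = 1 → ¬ A v₀) :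
    (2 * n - 2) + (univ.filter (fun u => u ≠ v₀ ∧ g u u = 2)).card + χ
      ≤ ∑ u, ∑ x, ((g u x : ℕ)) := by
  classical
  set c : V → ℕ := fun u => ∑ x, ((g u x : ℕ)) with hc
  have htot : ∑ u, ∑ x, ((g u x : ℕ)) = ∑ u, c u := rfl
  rw [htot]
  set K : Finset V := univ.filter (fun u => u ≠ v₀ ∧ g u u = 2) with hK
  set L : Finset V := univ.filter (fun u => u ≠ v₀ ∧ c u = 1) with hL
  have hsingle : ∀ u x, ((g u x : ℕ)) ≤ c u := fun u x =>
    Finset.single_le_sum (f := fun x => ((g u x : ℕ))) (fun _ _ => Nat.zero_le _) (mem_univ x)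
  have hpair : ∀ (u : V) {x y : V}, x ≠ y → ((g u x : ℕ)) + ((g u y : ℕ)) ≤ c u := by
    intro u x y hxy
    have h1 : ∑ i ∈ ({x, y} : Finset V), ((g u i : ℕ)) ≤ c u :=
      Finset.sum_le_sum_of_subset (Finset.subset_univ _)
    rwa [Finset.sum_pair hxy] at h1
  have htriple : ∀ (u : V) {x y z : V}, x ≠ y → x ≠ z → y ≠ z →
      ((g u x : ℕ)) + ((g u y : ℕ)) + ((g u z : ℕ)) ≤ c u := by
    intro u x y z hxy hxz hyz
    have h1 : ∑ i ∈ ({x, y, z} : Finset V), ((g u i : ℕ)) ≤ c u :=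
      Finset.sum_le_sum_of_subset (Finset.subset_univ _)
    rw [Finset.sum_insert (by simp [hxy, hxz]), Finset.sum_pair hyz] at h1
    omega
  -- F1
  have hF1 : ∀ u, u ≠ v₀ → 1 ≤ c u := by
    intro u hne
    obtain ⟨z, hzu, hza⟩ := hnu u hne
    by_cases h0 : g u z = 0
    · rcases hdom u z (fun h => absurd h.symm hzu) h0 with ⟨y, _, hy2⟩ | ⟨ha, _⟩
      · have h2 := hsingle u y
        rw [val_two hy2] at h2; omega
      · exact absurd ha hza
    · have h1 := val_one_le h0
      have h2 := hsingle u z; omega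
  -- F2
  have hF2 : ∀ u ∈ K, 3 ≤ c u := by
    intro u hu
    rw [hK, Finset.mem_filter] at hu
    obtain ⟨-, hne, h22⟩ := hu
    obtain ⟨z, hzu, hza⟩ := hnu u hne
    by_cases h0 : g u z = 0
    · rcases hdom u z (fun h => absurd h.symm hzu) h0 with ⟨y, hyadj, hy2⟩ | ⟨ha, _⟩
      · have hyu : y ≠ u := fun h => hza (h ▸ hyadj)
        have h2 := hpair u hyu
        rw [val_two hy2, val_two h22] at h2; omega
      · exact absurd ha hza
    · have h1 := val_one_le h0
      have h2 := hpair u hzu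
      rw [val_two h22] at h2; omega
  have hKnotL : ∀ u ∈ K, u ∉ L := by
    intro u hu hul
    have h3 := hF2 u hu
    rw [hL, Finset.mem_filter] at hul
    omega
  -- F3
  have hF3 : ∀ u ∈ L, ∃ z, z ≠ u ∧ z ≠ v₀ ∧ ∀ x, x ≠ u → x ≠ z → g x u = 2 := by
    intro u hu
    rw [hL, Finset.mem_filter] at hu
    obtain ⟨-, hne, hc1⟩ := hu
    have hno2 : ∀ y, g u y ≠ 2 := by
      intro y hy
      have h2 := hsingle u y
      rw [val_two hy] at h2; omega
    obtain ⟨z, hzu, hza⟩ := hnu u hne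
    have hz1 : 1 ≤ ((g u z : ℕ)) := by
      by_cases h0 : g u z = 0
      · rcases hdom u z (fun h => absurd h.symm hzu) h0 with ⟨y, _, hy2⟩ | ⟨ha, _⟩
        · exact absurd hy2 (hno2 y)
        · exact absurd ha hza
      · exact val_one_le h0
    have hzv : z ≠ v₀ := by
      intro h
      exact hza (h ▸ (hv₀ u hne).symm)
    refine ⟨z, hzu, hzv, fun x hxu hxz => ?_⟩
    have h0 : g u x = 0 := by
      by_contra h0
      have h1 := val_one_le h0
      have h2 := hpair u hxz
      omega
    rcases hdom u x (fun h => absurd h.symm hxu) h0 with ⟨y, _, hy2⟩ | ⟨-, h2⟩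
    · exact absurd hy2 (hno2 y)
    · exact h2
  have hnotL : ∀ u, u ≠ v₀ → u ∉ L → 2 ≤ c u := by
    intro u hne hul
    have h1 := hF1 u hne
    have h2 : ¬ (c u = 1) := by
      intro hcu
      exact hul (by rw [hL, Finset.mem_filter]; exact ⟨mem_univ u, hne, hcu⟩)
    omega
  have hcv : χ = 1 → 1 ≤ c v₀ := by
    intro h1
    have hA := hχ' h1
    by_cases h0 : g v₀ v₀ = 0
    · rcases hdom v₀ v₀ (fun _ => hA) h0 with ⟨y, _, hy2⟩ | ⟨ha, _⟩
      · have h2 := hsingle v₀ y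
        rw [val_two hy2] at h2; omega
      · exact absurd ha (G.loopless.irrefl v₀)
    · have := val_one_le h0
      have := hsingle v₀ v₀; omega
  by_cases hLe : L = ∅
  -- case m = 0
  · have hsplit := Finset.sum_erase_add univ c (mem_univ v₀)
    have hrest : ∀ x ∈ univ.erase v₀, 2 + (if x ∈ K then 1 else 0) ≤ c x := by
      intro x hx
      have hxv : x ≠ v₀ := (Finset.mem_erase.mp hx).1
      by_cases hxK : x ∈ K
      · have := hF2 x hxK; simp [hxK]; omega
      · have := hnotL x hxv (by simp [hLe]); simp [hxK]; omega
    have hsum1 : ∑ x ∈ univ.erase v₀, (2 + (if x ∈ K then 1 else 0)) ≤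
        ∑ x ∈ univ.erase v₀, c x := Finset.sum_le_sum hrest
    have hsum2 : ∑ x ∈ univ.erase v₀, (2 + (if x ∈ K then (1:ℕ) else 0))
        = 2 * (univ.erase v₀).card + ((univ.erase v₀) ∩ K).card := by
      rw [Finset.sum_add_distrib, Finset.sum_const, smul_eq_mul, mul_comm, sum_ind]
    have hcard : (univ.erase v₀).card = n - 1 := by
      rw [Finset.card_erase_of_mem (mem_univ v₀), Finset.card_univ, hn]
    have hKsub : (univ.erase v₀) ∩ K = K := by
      ext x
      simp only [Finset.mem_inter, Finset.mem_erase, Finset.mem_univ, true_and, hK,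
        Finset.mem_filter]
      tauto
    rw [hcard, hKsub] at hsum2
    have h1 := hcv
    omega
  · obtain ⟨u, hu⟩ := Finset.nonempty_iff_ne_empty.mpr hLe
    have huv : u ≠ v₀ := by rw [hL, Finset.mem_filter] at hu; exact hu.2.1
    have hcu : c u = 1 := by rw [hL, Finset.mem_filter] at hu; exact hu.2.2
    obtain ⟨z, hzu, hzv, hdem⟩ := hF3 u hu
    by_cases hL1 : ∀ u' ∈ L, u' = u
    -- case m = 1
    · have hcvz : 2 ≤ c v₀ := by
        have h2 : g v₀ u = 2 := hdem v₀ (Ne.symm huv) (Ne.symm hzv)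
        have := hsingle v₀ u
        rw [val_two h2] at this; omega
      have hzL : z ∉ L := fun h => hzu (hL1 z h)
      have hcz : 2 ≤ c z := hnotL z hzv hzL
      have huK : u ∉ K := fun h => (hKnotL u h) hu
      set T : Finset V := {u, z, v₀} with hT
      have hTcard : T.card = 3 := by
        rw [hT, Finset.card_insert_of_notMem (by simp [hzu.symm, huv]),
          Finset.card_pair hzv]
      have hsplit := Finset.sum_sdiff (Finset.subset_univ T) (f := c)
      have hsumT : ∑ x ∈ T, c x = c u + (c z + c v₀) := by
        rw [hT, Finset.sum_insert (by simp [hzu.symm, huv]), Finset.sum_pair hzv]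
      have hrest : ∀ x ∈ univ \ T, 2 + 2 * (if x ∈ K then 1 else 0) ≤ c x := by
        intro x hx
        rw [Finset.mem_sdiff, hT] at hx
        have hxu : x ≠ u := by intro h; exact hx.2 (by simp [h])
        have hxz : x ≠ z := by intro h; exact hx.2 (by simp [h])
        have hxv : x ≠ v₀ := by intro h; exact hx.2 (by simp [h])
        have h2 : g x u = 2 := hdem x hxu hxz
        by_cases hxK : x ∈ K
        · have h22 : g x x = 2 := by
            rw [hK, Finset.mem_filter] at hxK; exact hxK.2.2
          have := hpair x (Ne.symm hxu)
          rw [val_two h2, val_two h22] at this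
          simp [hxK]; omega
        · have := hsingle x u
          rw [val_two h2] at this
          simp [hxK]; omega
      have hsum1 : ∑ x ∈ univ \ T, (2 + 2 * (if x ∈ K then 1 else 0)) ≤
          ∑ x ∈ univ \ T, c x := Finset.sum_le_sum hrest
      have hsum2 : ∑ x ∈ univ \ T, (2 + 2 * (if x ∈ K then (1:ℕ) else 0))
          = 2 * (univ \ T).card + 2 * ((univ \ T) ∩ K).card := by
        rw [Finset.sum_add_distrib, Finset.sum_const, smul_eq_mul, mul_comm,
          ← Finset.mul_sum, sum_ind]
      have hcard : (univ \ T).card = n - 3 := by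
        rw [Finset.card_sdiff_of_subset (Finset.subset_univ T), Finset.card_univ, hn, hTcard]
      have hinter : (univ \ T) ∩ K = K \ T := by
        ext x; simp only [Finset.mem_inter, Finset.mem_sdiff, Finset.mem_univ, true_and]
        tauto
      have hKT : (K \ T).card + (K ∩ T).card = K.card := Finset.card_sdiff_add_card_inter K T
      have hKTz : K ∩ T ⊆ {z} := by
        intro x hx
        rw [Finset.mem_inter, hT] at hx
        have hxK := hx.1
        have hxT := hx.2
        simp only [Finset.mem_insert, Finset.mem_singleton] at hxT
        rcases hxT with h | h | h
        · exact absurd (h ▸ hxK) huK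
        · simp [h]
        · rw [hK, Finset.mem_filter] at hxK; exact absurd h hxK.2.1
      have hKTcard : (K ∩ T).card ≤ 1 := by
        have := Finset.card_le_card hKTz
        simpa using this
      have hzK : (K ∩ T).card = 1 → 3 ≤ c z := by
        intro h1
        have hzmem : z ∈ K := by
          obtain ⟨x, hx⟩ := Finset.card_eq_one.mp h1
          have : z ∈ ({x} : Finset V) := by
            have hxz : x ∈ ({z} : Finset V) := hKTz (hx ▸ Finset.mem_singleton_self x)
            simp only [Finset.mem_singleton] at hxz ⊢
            exact hxz.symm
          rw [← hx] at this
          exact (Finset.mem_inter.mp this).1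
        exact hF2 z hzmem
      rw [hcard, hinter] at hsum2
      by_cases hzKm : (K ∩ T).card = 1
      · have h3 := hzK hzKm; omega
      · omega
    -- case m = 2
    · push_neg at hL1
      obtain ⟨u', hu', huu'⟩ := hL1
      have hu'v : u' ≠ v₀ := by rw [hL, Finset.mem_filter] at hu'; exact hu'.2.1
      have hcu' : c u' = 1 := by rw [hL, Finset.mem_filter] at hu'; exact hu'.2.2
      obtain ⟨z', hz'u, hz'v, hdem'⟩ := hF3 u' hu'
      have hu'z : u' = z := by
        by_contra h
        have h2 : g u' u = 2 := hdem u' huu' h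
        have := hsingle u' u
        rw [val_two h2] at this; omega
      have huz' : u = z' := by
        by_contra h
        have h2 : g u u' = 2 := hdem' u (fun hh => huu' hh.symm) h
        have := hsingle u u'
        rw [val_two h2] at this; omega
      set T : Finset V := {u, u'} with hT
      have hTcard : T.card = 2 := Finset.card_pair (fun h => huu' h.symm)
      have hsplit := Finset.sum_sdiff (Finset.subset_univ T) (f := c)
      have hsumT : ∑ x ∈ T, c x = c u + c u' := Finset.sum_pair (fun h => huu' h.symm)
      have hrest : ∀ x ∈ univ \ T, 4 + 2 * (if x ∈ K then 1 else 0) ≤ c x := by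
        intro x hx
        rw [Finset.mem_sdiff, hT] at hx
        have hxu : x ≠ u := by intro h; exact hx.2 (by simp [h])
        have hxu' : x ≠ u' := by intro h; exact hx.2 (by simp [h])
        have h2 : g x u = 2 := hdem x hxu (hu'z ▸ hxu')
        have h2' : g x u' = 2 := hdem' x hxu' (huz' ▸ hxu)
        by_cases hxK : x ∈ K
        · have h22 : g x x = 2 := by
            rw [hK, Finset.mem_filter] at hxK; exact hxK.2.2
          have := htriple x (show u ≠ u' from fun h => huu' h.symm) (Ne.symm hxu) (Ne.symm hxu')
          rw [val_two h2, val_two h2', val_two h22] at this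
          simp [hxK]; omega
        · have := hpair x (show u ≠ u' from fun h => huu' h.symm)
          rw [val_two h2, val_two h2'] at this
          simp [hxK]; omega
      have hsum1 : ∑ x ∈ univ \ T, (4 + 2 * (if x ∈ K then 1 else 0)) ≤
          ∑ x ∈ univ \ T, c x := Finset.sum_le_sum hrest
      have hsum2 : ∑ x ∈ univ \ T, (4 + 2 * (if x ∈ K then (1:ℕ) else 0))
          = 4 * (univ \ T).card + 2 * ((univ \ T) ∩ K).card := by
        rw [Finset.sum_add_distrib, Finset.sum_const, smul_eq_mul, mul_comm,
          ← Finset.mul_sum, sum_ind]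
      have hcard : (univ \ T).card = n - 2 := by
        rw [Finset.card_sdiff_of_subset (Finset.subset_univ T), Finset.card_univ, hn, hTcard]
      have hinter : (univ \ T) ∩ K = K \ T := by
        ext x; simp only [Finset.mem_inter, Finset.mem_sdiff, Finset.mem_univ, true_and]
        tauto
      have hKT : (K \ T).card + (K ∩ T).card = K.card := Finset.card_sdiff_add_card_inter K T
      have hKT0 : K ∩ T = ∅ := by
        ext x
        simp only [Finset.mem_inter, hT, Finset.mem_insert, Finset.mem_singleton,
          Finset.notMem_empty, iff_false, not_and]
        intro hxK hxT
        have h3 := hF2 x hxK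
        rcases hxT with h | h
        · rw [h] at h3; omega
        · rw [h] at h3; omega
      rw [hcard, hinter] at hsum2
      rw [hKT0] at hKT
      simp only [Finset.card_empty] at hKT
      omega


end Block

section Main

variable [Fintype V] [DecidableEq V] (G : SimpleGraph V) (n : ℕ) (v₀ : V)

/-- The upper bound construction. -/
lemma upper (hv₀ : ∀ x, x ≠ v₀ → G.Adj v₀ x) (hn : Fintype.card V = n) (hn1 : 1 ≤ n) :
    ∃ F : (Fin (s+2) → V) → Fin 3, IsRDF (sierpinski G (s+2)) F ∧
      romanWeight F = n ^ s * (2 * n - 1) := by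
  classical
  refine ⟨fun a => if a iT = v₀ then (if a iS = v₀ then 1 else 2) else 0, ?_, ?_⟩
  · intro a h0
    replace h0 : (if a iT = v₀ then if a iS = v₀ then (1:Fin 3) else 2 else 0) = 0 := h0
    have haT : a iT ≠ v₀ := by
      intro h
      rw [if_pos h] at h0
      by_cases h2 : a iS = v₀ <;> simp [h2] at h0
    by_cases hS : a iS = v₀
    · -- swap last two coordinates
      set b : Fin (s+2) → V :=
        fun j => if (j:ℕ) = s then a iT else if (j:ℕ) = s+1 then v₀ else a j with hb
      have hbS : b iS = a iT := by
        show (if ((iS : Fin (s+2)):ℕ) = s then a iT else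
          if ((iS : Fin (s+2)):ℕ) = s+1 then v₀ else a iS) = a iT
        rw [iS_val, if_pos rfl]
      have hbT : b iT = v₀ := by
        show (if ((iT : Fin (s+2)):ℕ) = s then a iT else
          if ((iT : Fin (s+2)):ℕ) = s+1 then v₀ else a iT) = v₀
        rw [iT_val, if_neg (show ¬ (s+1 = s) by omega), if_pos rfl]
      refine ⟨b, ⟨iS, ?_, ?_, ?_⟩, ?_⟩
      · intro j hj
        have hj1 : (j:ℕ) < s := by simpa [Fin.lt_def, iS] using hj
        show (if (j:ℕ) = s then a iT else if (j:ℕ) = s+1 then v₀ else a j) = a j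
        rw [if_neg (by omega), if_neg (by omega)]
      · rw [hbS, hS]
        exact (hv₀ _ haT).symm
      · intro j hj
        have hj1 : s < (j:ℕ) := by simpa [Fin.lt_def, iS] using hj
        have hj2 : (j:ℕ) < s + 2 := j.isLt
        have hjT : j = iT := Fin.ext (by simp only [iT]; omega)
        subst hjT
        refine ⟨?_, ?_⟩
        · rw [hbT, hS]
        · rw [hbS]
      · show (if b iT = v₀ then if b iS = v₀ then (1:Fin 3) else 2 else 0) = 2
        rw [hbT, if_pos rfl, hbS, if_neg haT]
    · -- change last coordinate to v₀
      set b : Fin (s+2) → V := fun j => if (j:ℕ) = s+1 then v₀ else a j with hb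
      have hbS : b iS = a iS := by
        show (if ((iS : Fin (s+2)):ℕ) = s+1 then v₀ else a iS) = a iS
        rw [iS_val, if_neg (show ¬ (s = s+1) by omega)]
      have hbT : b iT = v₀ := by
        show (if ((iT : Fin (s+2)):ℕ) = s+1 then v₀ else a iT) = v₀
        rw [iT_val, if_pos rfl]
      refine ⟨b, ⟨iT, ?_, ?_, ?_⟩, ?_⟩
      · intro j hj
        have hj1 : (j:ℕ) < s + 1 := by simpa [Fin.lt_def, iT] using hj
        show (if (j:ℕ) = s+1 then v₀ else a j) = a j
        rw [if_neg (by omega)]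
      · rw [hbT]
        exact hv₀ _ haT
      · intro j hj
        have hj1 : s + 1 < (j:ℕ) := by simpa [Fin.lt_def, iT] using hj
        have hj2 : (j:ℕ) < s + 2 := j.isLt
        omega
      · show (if b iT = v₀ then if b iS = v₀ then (1:Fin 3) else 2 else 0) = 2
        rw [hbT, if_pos rfl, hbS, if_neg hS]
  · rw [romanWeight, sum_words]
    have hW : ∀ w : Fin s → V, ∑ u : V, ∑ x : V,
        (((if (ext w u x) iT = v₀ then (if (ext w u x) iS = v₀ then (1 : Fin 3) else 2) else 0) : Fin 3) : ℕ)
          = 2 * n - 1 := by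
      intro w
      have hpt : ∀ u x : V,
          (((if (ext w u x) iT = v₀ then (if (ext w u x) iS = v₀ then (1 : Fin 3) else 2) else 0) : Fin 3) : ℕ)
            = if x = v₀ then (if u = v₀ then 1 else 2) else 0 := by
        intro u x
        rw [ext_iT, ext_iS]
        by_cases h1 : x = v₀ <;> by_cases h2 : u = v₀ <;> simp [h1, h2]
      have h1 : ∀ u : V, ∑ x : V, (if x = v₀ then (if u = v₀ then (1:ℕ) else 2) else 0)
          = (if u = v₀ then 1 else 2) := by
        intro u
        rw [Finset.sum_ite_eq' univ v₀ (fun _ => if u = v₀ then (1:ℕ) else 2)]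
        simp
      have h2 : ∑ u : V, (if u = v₀ then (1:ℕ) else 2) = 2 * n - 1 := by
        have ha : ∑ u : V, ((if u = v₀ then (1:ℕ) else 2) + (if u = v₀ then 1 else 0))
            = 2 * n := by
          have : ∀ u : V, ((if u = v₀ then (1:ℕ) else 2) + (if u = v₀ then 1 else 0)) = 2 := by
            intro u; by_cases h : u = v₀ <;> simp [h]
          rw [Finset.sum_congr rfl (fun u _ => this u), Finset.sum_const, card_univ, hn,
            smul_eq_mul, mul_comm]
        have hb : ∑ u : V, (if u = v₀ then (1:ℕ) else 0) = 1 := by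
          rw [Finset.sum_ite_eq' univ v₀ (fun _ => (1:ℕ))]
          simp
        rw [Finset.sum_add_distrib, hb] at ha
        omega
      calc ∑ u : V, ∑ x : V,
          (((if (ext w u x) iT = v₀ then (if (ext w u x) iS = v₀ then (1 : Fin 3) else 2) else 0) : Fin 3) : ℕ)
          = ∑ u : V, ∑ x : V, (if x = v₀ then (if u = v₀ then (1:ℕ) else 2) else 0) := by
            exact Finset.sum_congr rfl fun u _ => Finset.sum_congr rfl fun x _ => hpt u x
        _ = ∑ u : V, (if u = v₀ then (1:ℕ) else 2) := Finset.sum_congr rfl fun u _ => h1 u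
        _ = 2 * n - 1 := h2
    rw [Finset.sum_congr rfl fun w _ => hW w, Finset.sum_const, card_univ, smul_eq_mul]
    congr 1
    rw [Fintype.card_fun, Fintype.card_fin, hn]

end Main

end S11

namespace S11

variable {V : Type*} {s : ℕ} [Fintype V] [DecidableEq V]

lemma inj_aux' (G : SimpleGraph V) (v₀ : V) {w₁ w₂ : Fin s → V} {b : Fin (s+2) → V}
    {i₁ i₂ : Fin (s+2)} (hlt₁ : (i₁:ℕ) < s) (hlt₂ : (i₂:ℕ) < s)
    (hle : (i₁:ℕ) ≤ (i₂:ℕ))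
    (h₁ : EW G b (ext w₁ v₀ v₀) i₁) (h₂ : EW G b (ext w₂ v₀ v₀) i₂) : w₁ = w₂ := by
  obtain ⟨h11, h12, h13⟩ := h₁
  obtain ⟨h21, h22, h23⟩ := h₂
  have hbv₁ : b i₁ = v₀ := by
    have h := (h13 iT (by rw [Fin.lt_def, iT_val]; omega)).2
    rw [ext_iT] at h; exact h.symm
  have hbv₂ : b i₂ = v₀ := by
    have h := (h23 iT (by rw [Fin.lt_def, iT_val]; omega)).2
    rw [ext_iT] at h; exact h.symm
  rcases lt_or_eq_of_le hle with hlt | heq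
  · exfalso
    have hfi : i₁ < i₂ := by rw [Fin.lt_def]; exact hlt
    have hb2 := (h13 i₂ hfi).1
    rw [ext_lt w₁ v₀ v₀ hlt₁] at hb2
    have hw1v : w₁ ⟨(i₁:ℕ), hlt₁⟩ = v₀ := by rw [← hb2, hbv₂]
    have h12' := h12
    rw [hbv₁, ext_lt w₁ v₀ v₀ hlt₁, hw1v] at h12'
    exact G.loopless.irrefl v₀ h12'
  · have hi : i₂ = i₁ := Fin.ext heq.symm
    subst hi
    funext j
    have hJs : (j:ℕ) < s + 2 := by omega
    set J : Fin (s+2) := ⟨(j:ℕ), hJs⟩ with hJ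
    have hJv : (J:ℕ) = (j:ℕ) := rfl
    rcases lt_trichotomy ((j:ℕ)) ((i₂:ℕ)) with hj | hj | hj
    · have hJi : J < i₂ := by rw [Fin.lt_def]; exact hj
      have e1 : b J = w₁ j := by
        rw [h11 J hJi, ext_lt w₁ v₀ v₀ (show (J:ℕ) < s from j.2)]
      have e2 : b J = w₂ j := by
        rw [h21 J hJi, ext_lt w₂ v₀ v₀ (show (J:ℕ) < s from j.2)]
      rw [← e1, e2]
    · have hJ' : ((⟨(i₂:ℕ)+1, by omega⟩ : Fin (s+2)):ℕ) = (i₂:ℕ)+1 := rfl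
      have hgt : i₂ < (⟨(i₂:ℕ)+1, by omega⟩ : Fin (s+2)) := by rw [Fin.lt_def, hJ']; omega
      have e1 := (h13 _ hgt).1
      have e2 := (h23 _ hgt).1
      rw [ext_lt w₁ v₀ v₀ hlt₁] at e1
      rw [ext_lt w₂ v₀ v₀ hlt₂] at e2
      have hji : j = ⟨(i₂:ℕ), hlt₁⟩ := Fin.ext hj
      rw [hji]
      rw [← e1, e2]
    · have hgt : i₂ < J := by rw [Fin.lt_def]; exact hj
      have e1 := (h13 J hgt).2
      have e2 := (h23 J hgt).2
      rw [ext_lt w₁ v₀ v₀ (show (J:ℕ) < s from j.2)] at e1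
      rw [ext_lt w₂ v₀ v₀ (show (J:ℕ) < s from j.2)] at e2
      have e1' : w₁ j = b i₂ := by rw [← e1]
      have e2' : w₂ j = b i₂ := by rw [← e2]
      rw [e1', e2']

lemma inj_aux (G : SimpleGraph V) (v₀ : V) {w₁ w₂ : Fin s → V} {b : Fin (s+2) → V}
    {i₁ i₂ : Fin (s+2)} (hlt₁ : (i₁:ℕ) < s) (hlt₂ : (i₂:ℕ) < s)
    (h₁ : EW G b (ext w₁ v₀ v₀) i₁) (h₂ : EW G b (ext w₂ v₀ v₀) i₂) : w₁ = w₂ := by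
  rcases le_total ((i₁:ℕ)) ((i₂:ℕ)) with h | h
  · exact inj_aux' G v₀ hlt₁ hlt₂ h h₁ h₂
  · exact (inj_aux' G v₀ hlt₂ hlt₁ h h₂ h₁).symm

lemma lower (G : SimpleGraph V) (n : ℕ) (v₀ : V)
    (hn : Fintype.card V = n) (hn4 : 4 ≤ n)
    (hv₀ : ∀ x, x ≠ v₀ → G.Adj v₀ x)
    (hnu : ∀ u, u ≠ v₀ → ∃ z, z ≠ u ∧ ¬ G.Adj u z)
    (f : (Fin (s+2) → V) → Fin 3) (hf : IsRDF (sierpinski G (s+2)) f) :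
    n ^ s * (2 * n - 1) ≤ ∑ a, ((f a : ℕ)) := by
  classical
  set A : (Fin s → V) → V → Prop := fun w u =>
    ∃ b : Fin (s+2) → V, ∃ i : Fin (s+2), (i:ℕ) < s ∧ f b = 2 ∧ EW G b (ext w u u) i with hA
  -- the partial-RDF property of each block
  have hdom : ∀ w u x, (u = x → ¬ A w u) → f (ext w u x) = 0 →
      (∃ y, G.Adj y x ∧ f (ext w u y) = 2) ∨ (G.Adj u x ∧ f (ext w x u) = 2) := by
    intro w u x hnA h0
    obtain ⟨b, hadj, hb2⟩ := hf (ext w u x) h0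
    obtain ⟨i, h1, h2, h3⟩ := hadj
    rcases lt_trichotomy ((i:ℕ)) s with hi | hi | hi
    · -- external edge: diagonal vertex
      have hiS : i < iS := by rw [Fin.lt_def, iS_val]; exact hi
      have hiT : i < iT := by rw [Fin.lt_def, iT_val]; omega
      have e1 := (h3 iS hiS).2
      have e2 := (h3 iT hiT).2
      rw [ext_iS] at e1
      rw [ext_iT] at e2
      have hux : u = x := by rw [e1, e2]
      subst hux
      exact absurd (show A w u from ⟨b, i, hi, hb2, h1, h2, h3⟩) (hnA rfl)
    · -- cross edge inside the block
      right
      have hiT : i < iT := by rw [Fin.lt_def, iT_val]; omega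
      have e1 := (h3 iT hiT).1
      have e2 := (h3 iT hiT).2
      have hai : ext w u x i = u := ext_s w u x hi
      rw [ext_iT] at e2
      rw [hai] at e1
      have hbx : b = ext w x u := by
        funext j
        rcases lt_trichotomy ((j:ℕ)) s with hj | hj | hj
        · have hji : j < i := by rw [Fin.lt_def]; omega
          rw [h1 j hji, ext_lt w u x hj, ext_lt w x u hj]
        · have hjiq : j = i := Fin.ext (by omega)
          rw [hjiq, ext_s w x u hi, ← e2]
        · have hj2 : (j:ℕ) < s + 2 := j.isLt
          have hjT : j = iT := Fin.ext (by rw [iT_val]; omega)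
          rw [hjT, e1, ext_iT]
      constructor
      · have h2' := h2
        rw [hai, ← e2] at h2'
        exact h2'.symm
      · rw [← hbx]; exact hb2
    · -- internal edge inside a copy
      left
      have hi2 : (i:ℕ) = s + 1 := by have := i.isLt; omega
      have hiT : i = iT := Fin.ext (by rw [iT_val]; omega)
      subst hiT
      refine ⟨b iT, ?_, ?_⟩
      · have h2' := h2
        rw [ext_iT] at h2'
        exact h2'
      · have hbe : ext w u (b iT) = b := by
          funext j
          rcases lt_trichotomy ((j:ℕ)) s with hj | hj | hj
          · have hji : j < iT := by rw [Fin.lt_def, iT_val]; omega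
            rw [ext_lt w u _ hj, h1 j hji, ext_lt w u x hj]
          · have hji : j < iT := by rw [Fin.lt_def, iT_val]; omega
            rw [ext_s w u _ hj, h1 j hji, ext_s w u x hj]
          · have hj2 : (j:ℕ) < s + 2 := j.isLt
            have hjT : j = iT := Fin.ext (by rw [iT_val]; omega)
            rw [hjT, ext_iT]
        rw [hbe]; exact hb2
  -- block-level bound
  have hblock : ∀ w : Fin s → V,
      (2*n - 2) + (univ.filter (fun u => u ≠ v₀ ∧ f (ext w u u) = 2)).card
        + (if A w v₀ then 0 else 1)
      ≤ ∑ u, ∑ x, ((f (ext w u x) : ℕ)) := by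
    intro w
    exact blockLemma G n hn hn4 v₀ hv₀ hnu (fun u x => f (ext w u x)) (A w) (hdom w)
      (if A w v₀ then 0 else 1) (by split <;> omega)
      (by split
          · intro h; omega
          · intro _; assumption)
  -- choose external dominators for needy blocks
  have hch : ∀ w : Fin s → V, A w v₀ → ∃ b, ∃ i : Fin (s+2),
      ((i:ℕ) < s ∧ f b = 2 ∧ EW G b (ext w v₀ v₀) i) := fun w hw => by
    obtain ⟨b, i, h1, h2, h3⟩ := hw
    exact ⟨b, i, h1, h2, h3⟩
  have hnV : Nonempty V := by
    rw [← Fintype.card_pos_iff]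
    omega
  choose! bf iF hlt hf2 hEW using hch
  -- facts about each chosen dominator
  have hfacts : ∀ w : Fin s → V, A w v₀ →
      bf w = ext (pre (bf w)) (bf w iS) (bf w iS) ∧ bf w iS ≠ v₀ := by
    intro w hw
    obtain ⟨h1, h2, h3⟩ := hEW w hw
    have hltw := hlt w hw
    have hSgt : iF w < iS := by rw [Fin.lt_def, iS_val]; exact hltw
    have hTgt : iF w < iT := by rw [Fin.lt_def, iT_val]; omega
    have eS := (h3 iS hSgt).1
    have eT := (h3 iT hTgt).1
    rw [ext_lt w v₀ v₀ hltw] at eS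
    rw [ext_lt w v₀ v₀ hltw] at eT
    have hST : bf w iT = bf w iS := by rw [eS, eT]
    constructor
    · conv_lhs => rw [← ext_pre (bf w)]
      rw [hST]
    · have hbiv : bf w (iF w) = v₀ := by
        have h := (h3 iT hTgt).2
        rw [ext_iT] at h; exact h.symm
      have h2' := h2
      rw [hbiv, ext_lt w v₀ v₀ hltw] at h2'
      intro hc
      rw [← eS, hc] at h2'
      exact G.loopless.irrefl v₀ h2'
  -- counting
  set P : Finset ((Fin s → V) × V) :=
    univ.filter (fun p => p.2 ≠ v₀ ∧ f (ext p.1 p.2 p.2) = 2) with hP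
  set NY : Finset (Fin s → V) := univ.filter (fun w => A w v₀) with hNY
  have hcard : NY.card ≤ P.card := by
    apply Finset.card_le_card_of_injOn (fun w => (pre (bf w), bf w iS))
    · intro w hw
      rw [hNY, Finset.mem_coe, Finset.mem_filter] at hw
      obtain ⟨hb, hd⟩ := hfacts w hw.2
      rw [Finset.mem_coe, hP, Finset.mem_filter]
      refine ⟨mem_univ _, hd, ?_⟩
      rw [← hb]
      exact hf2 w hw.2
    · intro w₁ hw₁ w₂ hw₂ heq
      simp only [Finset.mem_coe, hNY, Finset.mem_filter] at hw₁ hw₂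
      have hb₁ := (hfacts w₁ hw₁.2).1
      have hb₂ := (hfacts w₂ hw₂.2).1
      have hbe : bf w₁ = bf w₂ := by
        rw [hb₁, hb₂]
        rw [show pre (bf w₁) = pre (bf w₂) from congrArg Prod.fst heq,
          show bf w₁ iS = bf w₂ iS from congrArg Prod.snd heq]
      have hEW₂ := hEW w₂ hw₂.2
      rw [← hbe] at hEW₂
      exact inj_aux G v₀ (hlt w₁ hw₁.2) (hlt w₂ hw₂.2) (hEW w₁ hw₁.2) hEW₂
  have hPcard : P.card = ∑ w : Fin s → V,
      (univ.filter (fun u => u ≠ v₀ ∧ f (ext w u u) = 2)).card := by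
    rw [hP, Finset.card_filter, Fintype.sum_prod_type]
    exact Finset.sum_congr rfl fun w _ => (Finset.card_filter _ _).symm
  -- assemble
  rw [sum_words (fun a => ((f a : ℕ)))]
  have hsum1 : ∑ w : Fin s → V, ((2*n - 2)
      + (univ.filter (fun u => u ≠ v₀ ∧ f (ext w u u) = 2)).card
      + (if A w v₀ then 0 else 1))
      ≤ ∑ w : Fin s → V, ∑ u, ∑ x, ((f (ext w u x) : ℕ)) :=
    Finset.sum_le_sum (fun w _ => hblock w)
  have hN : (univ : Finset (Fin s → V)).card = n ^ s := by
    rw [card_univ, Fintype.card_fun, Fintype.card_fin, hn]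
  have hsplit : ∑ w : Fin s → V, ((2*n - 2)
      + (univ.filter (fun u => u ≠ v₀ ∧ f (ext w u u) = 2)).card
      + (if A w v₀ then 0 else 1))
      = n ^ s * (2*n-2) + (∑ w : Fin s → V,
          (univ.filter (fun u => u ≠ v₀ ∧ f (ext w u u) = 2)).card)
        + ∑ w : Fin s → V, (if A w v₀ then (0:ℕ) else 1) := by
    rw [Finset.sum_add_distrib, Finset.sum_add_distrib, Finset.sum_const, hN, smul_eq_mul]
  have hchi : ∑ w : Fin s → V, (if A w v₀ then (0:ℕ) else 1)
      = (univ.filter (fun w => ¬ A w v₀)).card := by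
    rw [Finset.card_filter]
    exact Finset.sum_congr rfl fun w _ => by split_ifs with h <;> simp [h]
  have htotal : NY.card + (univ.filter (fun w => ¬ A w v₀)).card
      = n ^ s := by
    rw [hNY, ← hN]
    exact Finset.card_filter_add_card_filter_not _
  have hmul : n ^ s * (2*n - 1) = n ^ s * (2*n - 2) + n ^ s := by
    have h : 2*n - 1 = (2*n - 2) + 1 := by omega
    rw [h, Nat.mul_add, mul_one]
  rw [hsplit, hchi] at hsum1
  rw [hPcard] at hcard
  omega

end S11


theorem stmt11 [Fintype V] (G : SimpleGraph V) (n : ℕ) (hn : Fintype.card V = n)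
    (hn4 : 4 ≤ n) (huniv : ∃! v : V, (G.neighborSet v).ncard = n - 1)
    (t : ℕ) (ht : 2 ≤ t) :
    gammaR (sierpinski G t) = n ^ (t - 2) * (2 * n - 1) := by
  classical
  obtain ⟨s, rfl⟩ : ∃ s, t = s + 2 := ⟨t - 2, by omega⟩
  have hts : s + 2 - 2 = s := by omega
  rw [hts]
  obtain ⟨v₀, hv₀n, hv₀u⟩ := huniv
  have hcompl : ∀ v : V, ({v}ᶜ : Set V).ncard = n - 1 := by
    intro v
    rw [Set.compl_eq_univ_diff, Set.ncard_diff (Set.subset_univ _), Set.ncard_univ,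
      Set.ncard_singleton, Nat.card_eq_fintype_card, hn]
  have huniversal : ∀ x, x ≠ v₀ → G.Adj v₀ x := by
    intro x hx
    have hsub : G.neighborSet v₀ ⊆ ({v₀}ᶜ : Set V) := by
      intro y hy
      simp only [Set.mem_compl_iff, Set.mem_singleton_iff]
      exact fun h => G.loopless.irrefl v₀ (h ▸ hy)
    have heq := Set.eq_of_subset_of_ncard_le hsub (by rw [hcompl, hv₀n]) (Set.toFinite _)
    have hx2 : x ∈ G.neighborSet v₀ := by
      rw [heq]
      simpa using hx
    exact hx2
  have hnu : ∀ u, u ≠ v₀ → ∃ z, z ≠ u ∧ ¬ G.Adj u z := by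
    intro u hu
    by_contra hcon
    push_neg at hcon
    have heq : G.neighborSet u = ({u}ᶜ : Set V) := by
      ext z
      simp only [SimpleGraph.mem_neighborSet, Set.mem_compl_iff, Set.mem_singleton_iff]
      constructor
      · intro h hz
        exact G.loopless.irrefl u (hz ▸ h)
      · intro h
        exact hcon z h
    have hcard : (G.neighborSet u).ncard = n - 1 := by rw [heq, hcompl]
    exact hu (hv₀u u hcard)
  obtain ⟨F, hFrdf, hFw⟩ := S11.upper (s := s) G n v₀ huniversal hn (by omega)
  have hmem : n ^ s * (2 * n - 1) ∈
      {k | ∃ f : (Fin (s+2) → V) → Fin 3, IsRDF (sierpinski G (s+2)) f ∧ romanWeight f = k} :=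
    ⟨F, hFrdf, hFw⟩
  unfold gammaR
  apply le_antisymm
  · exact Nat.sInf_le hmem
  · apply le_csInf ⟨_, hmem⟩
    rintro k ⟨f, hfr, rfl⟩
    exact S11.lower G n v₀ hn hn4 huniversal hnu f hfr
end
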